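/- arXiv:2204.07317 — 2 statements merged into one kernel-verified Lean document; each statement's English description precedes it below -/
import Mathlib

section
/- Let F: R^d → R be Lipschitz continuous with constant L_0, and for η > 0 define F_η(θ) = E_v[F(θ + η v)] with gradient ∇F_η(θ) = E_v[((F(θ + η v) − F(θ))/η) v], where v ~ N(0, I_d). Then for any η_1, η_2 > 0 and any θ ∈ R^d, ||∇F_{η_2}(θ) − ∇F_{η_1}(θ)|| ≤ 2 L_0 d |η_2 − η_1| / η_2. -/
open MeasureTheory ProbabilityTheory
open scoped NNReal ENNReal

noncomputable def stdGaussian (d : ℕ) : Measure (EuclideanSpace ℝ (Fin d)) :=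
  (Measure.pi fun _ => gaussianReal 0 1).map (MeasurableEquiv.toLp 2 (Fin d → ℝ))

open Real in
lemma aux_integrable_sq_mul_exp :
    Integrable (fun x : ℝ => x ^ 2 * rexp (-2⁻¹ * x ^ 2)) := by
  have hg : Integrable (fun x : ℝ => 4 * rexp (-4⁻¹ * x ^ 2)) :=
    (integrable_exp_neg_mul_sq (by norm_num : (0:ℝ) < 4⁻¹)).const_mul 4
  refine hg.mono' ?_ ?_
  · exact (((continuous_pow 2).mul
      (Real.continuous_exp.comp (continuous_const.mul (continuous_pow 2))))).aestronglyMeasurable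
  · filter_upwards with x
    have h1 : 4⁻¹ * x ^ 2 + 1 ≤ rexp (4⁻¹ * x ^ 2) := Real.add_one_le_exp _
    have h2 : x ^ 2 ≤ 4 * rexp (4⁻¹ * x ^ 2) := by nlinarith
    have h3 : (0:ℝ) < rexp (-2⁻¹ * x ^ 2) := Real.exp_pos _
    have h4 : x ^ 2 * rexp (-2⁻¹ * x ^ 2) ≤ 4 * rexp (-4⁻¹ * x ^ 2) := by
      calc x ^ 2 * rexp (-2⁻¹ * x ^ 2)
          ≤ (4 * rexp (4⁻¹ * x ^ 2)) * rexp (-2⁻¹ * x ^ 2) :=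
            mul_le_mul_of_nonneg_right h2 h3.le
        _ = 4 * rexp (-4⁻¹ * x ^ 2) := by
            rw [mul_assoc, ← Real.exp_add]
            congr 2
            ring
    rw [Real.norm_eq_abs, abs_of_nonneg (by positivity)]
    exact h4

open Real in
lemma aux_integral_sq_mul_exp :
    ∫ x : ℝ, x ^ 2 * rexp (-2⁻¹ * x ^ 2) = Real.sqrt (2 * π) := by
  have hu : ∀ x : ℝ, HasDerivAt (fun y : ℝ => y) 1 x := fun x => hasDerivAt_id x
  have hv : ∀ x : ℝ, HasDerivAt (fun y : ℝ => -rexp (-2⁻¹ * y ^ 2))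
      (x * rexp (-2⁻¹ * x ^ 2)) x := by
    intro x
    have h1 : HasDerivAt (fun y : ℝ => -2⁻¹ * y ^ 2) (-2⁻¹ * (2 * x ^ 1)) x :=
      (hasDerivAt_pow 2 x).const_mul _
    have h2 := (h1.exp).fun_neg
    exact h2.congr_deriv (by ring)
  have huv' : Integrable ((fun y : ℝ => y) * fun x : ℝ => x * rexp (-2⁻¹ * x ^ 2)) := by
    have := aux_integrable_sq_mul_exp
    apply this.congr
    filter_upwards with x
    simp only [Pi.mul_apply]
    ring
  have hu'v : Integrable ((fun _ : ℝ => (1:ℝ)) * fun y : ℝ => -rexp (-2⁻¹ * y ^ 2)) := by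
    have := (integrable_exp_neg_mul_sq (by norm_num : (0:ℝ) < 2⁻¹)).neg
    apply this.congr
    filter_upwards with x
    simp only [Pi.mul_apply, Pi.neg_apply]
    ring
  have huv : Integrable ((fun y : ℝ => y) * fun y : ℝ => -rexp (-2⁻¹ * y ^ 2)) := by
    have := (integrable_mul_exp_neg_mul_sq (by norm_num : (0:ℝ) < 2⁻¹)).neg
    apply this.congr
    filter_upwards with x
    simp only [Pi.mul_apply, Pi.neg_apply]
    ring
  have h := integral_mul_deriv_eq_deriv_mul_of_integrable (fun x _ => hu x) (fun x _ => hv x) huv' hu'v huv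
  have h2 : ∫ x : ℝ, x * (x * rexp (-2⁻¹ * x ^ 2)) = ∫ x : ℝ, x ^ 2 * rexp (-2⁻¹ * x ^ 2) := by
    congr 1
    funext x
    ring
  rw [h2] at h
  rw [h]
  have h3 : ∫ x : ℝ, (1:ℝ) * -rexp (-2⁻¹ * x ^ 2) = -∫ x : ℝ, rexp (-2⁻¹ * x ^ 2) := by
    rw [← integral_neg]
    congr 1
    funext x
    ring
  rw [h3, neg_neg, integral_gaussian]
  congr 1
  rw [div_eq_mul_inv, inv_inv, mul_comm]

open Real in
lemma aux_pdf_mul_sq (x : ℝ) :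
    gaussianPDFReal 0 1 x * x ^ 2 = (Real.sqrt (2 * π))⁻¹ * (x ^ 2 * rexp (-2⁻¹ * x ^ 2)) := by
  simp only [gaussianPDFReal, NNReal.coe_one, mul_one, sub_zero]
  rw [show -x ^ 2 / 2 = -2⁻¹ * x ^ 2 by ring]
  ring

lemma aux_pdf_meas : Measurable fun x : ℝ => (gaussianPDFReal 0 1 x).toNNReal :=
  (measurable_gaussianPDFReal 0 1).real_toNNReal

lemma aux_gaussianPDF_eq :
    gaussianPDF 0 1 = fun x => ((gaussianPDFReal 0 1 x).toNNReal : ENNReal) := rfl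

lemma aux_smul_eq (x : ℝ) :
    (gaussianPDFReal 0 1 x).toNNReal • (x ^ 2) = gaussianPDFReal 0 1 x * x ^ 2 := by
  rw [NNReal.smul_def, Real.coe_toNNReal _ (gaussianPDFReal_nonneg 0 1 x), smul_eq_mul]

open Real in
lemma aux_integrable_sq_gaussian : Integrable (fun x : ℝ => x ^ 2) (gaussianReal 0 1) := by
  rw [gaussianReal_of_var_ne_zero 0 one_ne_zero, aux_gaussianPDF_eq,
    integrable_withDensity_iff_integrable_smul aux_pdf_meas]
  have : Integrable (fun x : ℝ => (Real.sqrt (2 * π))⁻¹ * (x ^ 2 * rexp (-2⁻¹ * x ^ 2))) :=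
    aux_integrable_sq_mul_exp.const_mul _
  apply this.congr
  filter_upwards with x
  rw [← aux_pdf_mul_sq, ← aux_smul_eq]

open Real in
lemma aux_integral_sq_gaussian : ∫ x, x ^ 2 ∂(gaussianReal 0 1) = 1 := by
  rw [gaussianReal_of_var_ne_zero 0 one_ne_zero, aux_gaussianPDF_eq,
    integral_withDensity_eq_integral_smul aux_pdf_meas]
  have h : ∫ x : ℝ, (gaussianPDFReal 0 1 x).toNNReal • (x ^ 2)
      = ∫ x : ℝ, (Real.sqrt (2 * π))⁻¹ * (x ^ 2 * rexp (-2⁻¹ * x ^ 2)) := by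
    congr 1
    funext x
    rw [aux_smul_eq, aux_pdf_mul_sq]
  rw [h, integral_const_mul, aux_integral_sq_mul_exp, inv_mul_cancel₀]
  positivity

lemma aux_map_eval (d : ℕ) (i : Fin d) :
    (stdGaussian d).map (fun v => v i) = gaussianReal 0 1 := by
  classical
  rw [_root_.stdGaussian, Measure.map_map (show Measurable (fun v : EuclideanSpace ℝ (Fin d) => v i) from
    (measurable_pi_apply i).comp (WithLp.measurable_ofLp 2 _))
    (MeasurableEquiv.toLp 2 (Fin d → ℝ)).measurable]
  exact (Measure.pi_map_eval (fun _ : Fin d => gaussianReal 0 1) i).trans (by simp)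

lemma aux_integrable_eval_sq (d : ℕ) (i : Fin d) :
    Integrable (fun v : EuclideanSpace ℝ (Fin d) => (v i) ^ 2) (stdGaussian d) := by
  have h := aux_integrable_sq_gaussian
  rw [← aux_map_eval d i] at h
  exact (integrable_map_measure (μ := stdGaussian d)
    (f := fun v : EuclideanSpace ℝ (Fin d) => v i) (g := fun x : ℝ => x ^ 2)
    (continuous_pow 2).aestronglyMeasurable
    ((measurable_pi_apply i).comp (WithLp.measurable_ofLp 2 _)).aemeasurable).mp h

lemma aux_integral_eval_sq (d : ℕ) (i : Fin d) :
    ∫ v, (v i) ^ 2 ∂(stdGaussian d) = 1 := by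
  have h := integral_map (μ := stdGaussian d)
    (φ := fun v : EuclideanSpace ℝ (Fin d) => v i)
    (f := fun x : ℝ => x ^ 2) ((measurable_pi_apply i).comp (WithLp.measurable_ofLp 2 _)).aemeasurable
    (continuous_pow 2).aestronglyMeasurable
  rw [aux_map_eval d i] at h
  exact h.symm.trans aux_integral_sq_gaussian

lemma aux_norm_sq (d : ℕ) (v : EuclideanSpace ℝ (Fin d)) :
    ‖v‖ ^ 2 = ∑ i, (v i) ^ 2 := by
  rw [EuclideanSpace.norm_eq, Real.sq_sqrt (Finset.sum_nonneg fun i _ => sq_nonneg _)]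
  simp [sq_abs]

lemma aux_integrable_normSq (d : ℕ) :
    Integrable (fun v : EuclideanSpace ℝ (Fin d) => ‖v‖ ^ 2) (stdGaussian d) := by
  have h : (fun v : EuclideanSpace ℝ (Fin d) => ‖v‖ ^ 2)
      = fun v => ∑ i, (v i) ^ 2 := funext (aux_norm_sq d)
  rw [h]
  exact integrable_finset_sum _ fun i _ => aux_integrable_eval_sq d i

lemma aux_integral_normSq (d : ℕ) :
    ∫ v, ‖v‖ ^ 2 ∂(stdGaussian d) = d := by
  have h : (fun v : EuclideanSpace ℝ (Fin d) => ‖v‖ ^ 2)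
      = fun v => ∑ i, (v i) ^ 2 := funext (aux_norm_sq d)
  rw [h, integral_finset_sum _ (fun i _ => aux_integrable_eval_sq d i)]
  simp [aux_integral_eval_sq]

instance (d : ℕ) : IsProbabilityMeasure (stdGaussian d) := by
  unfold _root_.stdGaussian
  exact Measure.isProbabilityMeasure_map (MeasurableEquiv.toLp 2 (Fin d → ℝ)).measurable.aemeasurable

lemma aux_integrable_grad (d : ℕ) (F : EuclideanSpace ℝ (Fin d) → ℝ) (L₀ η : ℝ)
    (hLip : ∀ x y, |F x - F y| ≤ L₀ * ‖x - y‖) (hη : 0 < η)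
    (θ : EuclideanSpace ℝ (Fin d)) :
    Integrable (fun v => ((F (θ + η • v) - F θ) / η) • v) (stdGaussian d) := by
  have hF : Continuous F := by
    have hl : LipschitzWith (Real.toNNReal L₀) F := by
      apply LipschitzWith.of_dist_le_mul
      intro x y
      rw [Real.dist_eq, dist_eq_norm]
      exact le_trans (hLip x y)
        (mul_le_mul_of_nonneg_right (Real.le_coe_toNNReal L₀) (norm_nonneg _))
    exact hl.continuous
  apply Integrable.mono' ((aux_integrable_normSq d).const_mul L₀)
  · apply Continuous.aestronglyMeasurable
    exact (((hF.comp (continuous_const.add (continuous_id.const_smul η))).sub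
      continuous_const).div_const η).smul continuous_id
  · filter_upwards with v
    have h1 : |F (θ + η • v) - F θ| ≤ L₀ * (η * ‖v‖) := by
      have := hLip (θ + η • v) θ
      rwa [add_sub_cancel_left, norm_smul, Real.norm_eq_abs, abs_of_pos hη] at this
    rw [norm_smul, Real.norm_eq_abs, abs_div, abs_of_pos hη, div_mul_eq_mul_div,
      div_le_iff₀ hη]
    calc |F (θ + η • v) - F θ| * ‖v‖ ≤ (L₀ * (η * ‖v‖)) * ‖v‖ :=
      mul_le_mul_of_nonneg_right h1 (norm_nonneg v)
    _ = L₀ * ‖v‖ ^ 2 * η := by ring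

/-- For L₀-Lipschitz F, with ∇F_η(θ) = E_v[((F(θ+ηv) − F(θ))/η) v], for any η₁, η₂ > 0:
‖∇F_{η₂}(θ) − ∇F_{η₁}(θ)‖ ≤ 2 L₀ d |η₂ − η₁| / η₂. -/
theorem stmt_5 (d : ℕ) (F : EuclideanSpace ℝ (Fin d) → ℝ) (L₀ η₁ η₂ : ℝ)
    (hLip : ∀ x y, |F x - F y| ≤ L₀ * ‖x - y‖) (hη₁ : 0 < η₁) (hη₂ : 0 < η₂)
    (θ : EuclideanSpace ℝ (Fin d)) :
    ‖(∫ v, ((F (θ + η₂ • v) - F θ) / η₂) • v ∂(stdGaussian d))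
      - (∫ v, ((F (θ + η₁ • v) - F θ) / η₁) • v ∂(stdGaussian d))‖
      ≤ 2 * L₀ * d * |η₂ - η₁| / η₂ := by
  have hi₂ := aux_integrable_grad d F L₀ η₂ hLip hη₂ θ
  have hi₁ := aux_integrable_grad d F L₀ η₁ hLip hη₁ θ
  rw [← integral_sub hi₂ hi₁]
  have hC : Integrable (fun v : EuclideanSpace ℝ (Fin d) =>
      (2 * L₀ * |η₂ - η₁| / η₂) * ‖v‖ ^ 2) (stdGaussian d) :=
    (aux_integrable_normSq d).const_mul _
  have hb : ∀ v : EuclideanSpace ℝ (Fin d),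
      ‖((F (θ + η₂ • v) - F θ) / η₂) • v - ((F (θ + η₁ • v) - F θ) / η₁) • v‖
        ≤ (2 * L₀ * |η₂ - η₁| / η₂) * ‖v‖ ^ 2 := by
    intro v
    set a₁ := F (θ + η₁ • v) - F θ with ha₁
    set a₂ := F (θ + η₂ • v) - F θ with ha₂
    have h1 : |a₁| ≤ L₀ * (η₁ * ‖v‖) := by
      have := hLip (θ + η₁ • v) θ
      rwa [add_sub_cancel_left, norm_smul, Real.norm_eq_abs, abs_of_pos hη₁] at this
    have h2 : |a₂ - a₁| ≤ L₀ * (|η₂ - η₁| * ‖v‖) := by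
      have hth := hLip (θ + η₂ • v) (θ + η₁ • v)
      rw [add_sub_add_left_eq_sub, ← sub_smul, norm_smul, Real.norm_eq_abs] at hth
      have e2 : a₂ - a₁ = F (θ + η₂ • v) - F (θ + η₁ • v) := by
        rw [ha₂, ha₁]; ring
      rw [e2]
      exact hth
    have key : |a₂ / η₂ - a₁ / η₁| ≤ 2 * L₀ * |η₂ - η₁| / η₂ * ‖v‖ := by
      have e : a₂ / η₂ - a₁ / η₁ = (a₂ - a₁) / η₂ + a₁ * (η₁ - η₂) / (η₁ * η₂) := by
        field_simp
        ring
      calc |a₂ / η₂ - a₁ / η₁|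
          ≤ |(a₂ - a₁) / η₂| + |a₁ * (η₁ - η₂) / (η₁ * η₂)| := by
            rw [e]; exact abs_add_le _ _
        _ = |a₂ - a₁| / η₂ + |a₁| * |η₂ - η₁| / (η₁ * η₂) := by
            rw [abs_div, abs_of_pos hη₂, abs_div, abs_mul,
              abs_of_pos (mul_pos hη₁ hη₂), abs_sub_comm η₁ η₂]
        _ ≤ (L₀ * (|η₂ - η₁| * ‖v‖)) / η₂ + (L₀ * (η₁ * ‖v‖)) * |η₂ - η₁| / (η₁ * η₂) := by
            gcongr
        _ = 2 * L₀ * |η₂ - η₁| / η₂ * ‖v‖ := by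
            field_simp
            ring
    calc ‖(a₂ / η₂) • v - (a₁ / η₁) • v‖ = |a₂ / η₂ - a₁ / η₁| * ‖v‖ := by
          rw [← sub_smul, norm_smul, Real.norm_eq_abs]
      _ ≤ (2 * L₀ * |η₂ - η₁| / η₂ * ‖v‖) * ‖v‖ :=
          mul_le_mul_of_nonneg_right key (norm_nonneg v)
      _ = (2 * L₀ * |η₂ - η₁| / η₂) * ‖v‖ ^ 2 := by ring
  calc ‖∫ v, (((F (θ + η₂ • v) - F θ) / η₂) • v - ((F (θ + η₁ • v) - F θ) / η₁) • v)
        ∂(stdGaussian d)‖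
      ≤ ∫ v, (2 * L₀ * |η₂ - η₁| / η₂) * ‖v‖ ^ 2 ∂(stdGaussian d) :=
        norm_integral_le_of_norm_le hC (Filter.Eventually.of_forall hb)
    _ = (2 * L₀ * |η₂ - η₁| / η₂) * d := by
        rw [integral_const_mul, aux_integral_normSq d]
    _ = 2 * L₀ * d * |η₂ - η₁| / η₂ := by ring
end

section
/- Let F: R^d → R be L_0-Lipschitz and η > 0. Then the Gaussian-smoothed function F_η(θ) = E_v[F(θ+ηv)] (v ~ N(0,I_d)) has Lipschitz continuous gradient with constant L_η = (√d / η) L_0, i.e., ||∇F_η(x) − ∇F_η(y)|| ≤ (√d L_0 / η) ||x − y|| for all x, y. -/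
open MeasureTheory ProbabilityTheory

namespace StdGaussianAux13

open Real Set
open scoped ENNReal NNReal


lemma gPDF_eq (x : ℝ) : gaussianPDFReal 0 1 x = (√(2 * π))⁻¹ * rexp (-2⁻¹ * x ^ 2) := by
  simp only [gaussianPDFReal, NNReal.coe_one, mul_one, sub_zero]
  ring_nf

lemma meas_toNN : Measurable fun x => (gaussianPDFReal 0 1 x).toNNReal :=
  (measurable_gaussianPDFReal 0 1).real_toNNReal

lemma gaussianReal_eq :
    gaussianReal 0 1 = volume.withDensity fun x => ((gaussianPDFReal 0 1 x).toNNReal : ℝ≥0∞) :=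
  gaussianReal_of_var_ne_zero 0 one_ne_zero

lemma integral_g (g : ℝ → ℝ) :
    ∫ x, g x ∂(gaussianReal 0 1) = ∫ x, gaussianPDFReal 0 1 x * g x := by
  rw [gaussianReal_eq, integral_withDensity_eq_integral_smul meas_toNN]
  congr 1 with x
  rw [NNReal.smul_def, smul_eq_mul, Real.coe_toNNReal _ (gaussianPDFReal_nonneg _ _ _)]

lemma integrable_g_iff {g : ℝ → ℝ} :
    Integrable g (gaussianReal 0 1) ↔
      Integrable (fun x => gaussianPDFReal 0 1 x * g x) volume := by
  rw [gaussianReal_eq, integrable_withDensity_iff_integrable_smul meas_toNN]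
  constructor <;> intro h <;> refine h.congr (Filter.Eventually.of_forall fun x => ?_) <;>
    simp only [NNReal.smul_def, smul_eq_mul,
      Real.coe_toNNReal _ (gaussianPDFReal_nonneg 0 1 x)]

lemma integrable_id_g : Integrable (fun x => x) (gaussianReal 0 1) := by
  rw [integrable_g_iff]
  have h := (integrable_mul_exp_neg_mul_sq (show (0:ℝ) < 2⁻¹ by norm_num)).const_mul (√(2*π))⁻¹
  refine h.congr (Filter.Eventually.of_forall fun x => ?_)
  simp only [gPDF_eq]; ring

lemma integrable_sq_g : Integrable (fun x => x ^ 2) (gaussianReal 0 1) := by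
  rw [integrable_g_iff]
  have h := (integrable_rpow_mul_exp_neg_mul_sq (show (0:ℝ) < 2⁻¹ by norm_num)
    (show (-1:ℝ) < 2 by norm_num)).const_mul (√(2*π))⁻¹
  simp only [Real.rpow_two] at h
  refine h.congr (Filter.Eventually.of_forall fun x => ?_)
  simp only [gPDF_eq]; ring

lemma integral_id_g : ∫ x, x ∂(gaussianReal 0 1) = 0 := by
  rw [integral_g]
  have h := integral_neg_eq_self (fun x => gaussianPDFReal 0 1 x * x) (volume : Measure ℝ)
  have h2 : ∀ x : ℝ, gaussianPDFReal 0 1 (-x) * (-x) = -(gaussianPDFReal 0 1 x * x) := by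
    intro x; rw [gPDF_eq, gPDF_eq]; ring_nf
  simp_rw [h2] at h
  rw [integral_neg] at h
  linarith

lemma integral_sq_g : ∫ x, x ^ 2 ∂(gaussianReal 0 1) = 1 := by
  rw [integral_g]
  have h1 : ∀ x : ℝ, gaussianPDFReal 0 1 x * x ^ 2
      = (√(2*π))⁻¹ * (|x| ^ 2 * rexp (-2⁻¹ * |x| ^ 2)) := by
    intro x; rw [gPDF_eq, sq_abs]; ring
  simp_rw [h1]
  rw [integral_const_mul, integral_comp_abs (f := fun x => x ^ 2 * rexp (-2⁻¹ * x ^ 2))]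
  have h2 : ∫ x in Set.Ioi (0:ℝ), x ^ 2 * rexp (-2⁻¹ * x ^ 2)
      = (2⁻¹:ℝ) ^ (-((2:ℝ)+1)/2) * (1/2) * Real.Gamma (((2:ℝ)+1)/2) := by
    rw [← integral_rpow_mul_exp_neg_mul_rpow (by norm_num : (0:ℝ) < 2)
      (by norm_num : (-1:ℝ) < 2) (by norm_num : (0:ℝ) < 2⁻¹)]
    refine setIntegral_congr_fun measurableSet_Ioi fun x hx => ?_
    simp only [Real.rpow_two]
  rw [h2, show (2⁻¹:ℝ) ^ (-((2:ℝ)+1)/2) = 2 * √2 by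
      rw [show (-((2:ℝ)+1)/2) = -(3/2) by norm_num,
        Real.inv_rpow (by norm_num : (0:ℝ) ≤ 2), ← Real.rpow_neg (by norm_num : (0:ℝ) ≤ 2),
        neg_neg, show (3:ℝ)/2 = 1 + 1/2 by norm_num,
        Real.rpow_add (by norm_num : (0:ℝ) < 2), Real.rpow_one, ← Real.sqrt_eq_rpow],
    show Real.Gamma (((2:ℝ)+1)/2) = 1/2 * √π by
      rw [show ((2:ℝ)+1)/2 = 1/2 + 1 by norm_num, Real.Gamma_add_one (by norm_num),
        Real.Gamma_one_half_eq]]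
  rw [Real.sqrt_mul (by norm_num : (0:ℝ) ≤ 2)]
  have h2' : (0:ℝ) < √2 := by positivity
  have hπ : (0:ℝ) < √π := Real.sqrt_pos.mpr Real.pi_pos
  field_simp

variable {d : ℕ}

instance : IsProbabilityMeasure (stdGaussian d) :=
  Measure.isProbabilityMeasure_map (MeasurableEquiv.toLp 2 (Fin d → ℝ)).measurable.aemeasurable

lemma meas_eval (i : Fin d) : Measurable fun v : EuclideanSpace ℝ (Fin d) => v i :=
  (measurable_pi_apply i).comp (MeasurableEquiv.toLp 2 (Fin d → ℝ)).symm.measurable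

lemma stdGaussian_map_eval (i : Fin d) :
    (stdGaussian d).map (fun v => v i) = gaussianReal 0 1 := by
  rw [_root_.stdGaussian, Measure.map_map (meas_eval i) (MeasurableEquiv.toLp 2 (Fin d → ℝ)).measurable]
  refine Measure.ext fun s hs => ?_
  rw [Measure.map_apply ((meas_eval i).comp (MeasurableEquiv.toLp 2 (Fin d → ℝ)).measurable) hs]
  show Measure.pi (fun _ => gaussianReal 0 1) (Function.eval i ⁻¹' s) = _
  rw [← Set.univ_pi_update_univ, Measure.pi_pi]
  rw [Finset.prod_eq_single i (fun j _ hj => by rw [Function.update_of_ne hj]; simp)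
    (by simp)]
  simp

lemma integrable_eval {f : ℝ → ℝ} (hfm : AEStronglyMeasurable f (gaussianReal 0 1))
    (hf : Integrable f (gaussianReal 0 1)) (i : Fin d) :
    Integrable (fun v : EuclideanSpace ℝ (Fin d) => f (v i)) (stdGaussian d) := by
  rw [← stdGaussian_map_eval i] at hf hfm
  exact (integrable_map_measure hfm (meas_eval i).aemeasurable).mp hf

lemma integral_eval {f : ℝ → ℝ} (hfm : AEStronglyMeasurable f (gaussianReal 0 1)) (i : Fin d) :
    ∫ v : EuclideanSpace ℝ (Fin d), f (v i) ∂(stdGaussian d) = ∫ x, f x ∂(gaussianReal 0 1) := by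
  rw [← stdGaussian_map_eval i] at hfm ⊢
  exact (integral_map (φ := fun v : EuclideanSpace ℝ (Fin d) => v i)
    (meas_eval i).aemeasurable hfm).symm

lemma norm_sq_eq (v : EuclideanSpace ℝ (Fin d)) : ‖v‖ ^ 2 = ∑ i, (v i) ^ 2 := by
  rw [EuclideanSpace.norm_eq, Real.sq_sqrt (by positivity)]
  simp [sq_abs]

lemma integrable_norm_sq : Integrable (fun v : EuclideanSpace ℝ (Fin d) => ‖v‖ ^ 2)
    (stdGaussian d) := by
  have h : Integrable (fun v : EuclideanSpace ℝ (Fin d) => ∑ i, (v i) ^ 2) (stdGaussian d) :=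
    integrable_finset_sum _ fun i _ =>
      integrable_eval (continuous_pow 2).aestronglyMeasurable integrable_sq_g i
  exact h.congr (Filter.Eventually.of_forall fun v => (norm_sq_eq v).symm)

lemma integral_norm_sq : ∫ v, ‖v‖ ^ 2 ∂(stdGaussian d) = d := by
  simp_rw [norm_sq_eq]
  rw [integral_finset_sum _ fun i _ =>
    integrable_eval (continuous_pow 2).aestronglyMeasurable integrable_sq_g i]
  simp [integral_eval (f := fun x : ℝ => x ^ 2) (continuous_pow 2).aestronglyMeasurable,
    integral_sq_g]

lemma integrable_norm : Integrable (fun v : EuclideanSpace ℝ (Fin d) => ‖v‖) (stdGaussian d) := by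
  refine Integrable.mono' ((integrable_const 1).add integrable_norm_sq)
    continuous_norm.aestronglyMeasurable (Filter.Eventually.of_forall fun v => ?_)
  rw [Real.norm_eq_abs, abs_of_nonneg (norm_nonneg v)]
  simp only [Pi.add_apply]
  nlinarith [norm_nonneg v, sq_nonneg (‖v‖ - 1)]

lemma integral_norm_le : ∫ v, ‖v‖ ∂(stdGaussian d) ≤ Real.sqrt d := by
  have hmem : MemLp (fun v : EuclideanSpace ℝ (Fin d) => ‖v‖) 2 (stdGaussian d) := by
    refine (memLp_two_iff_integrable_sq continuous_norm.aestronglyMeasurable).mpr ?_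
    have := integrable_norm_sq (d := d)
    simpa [Pi.pow_apply] using this
  have hvar := variance_nonneg (fun v : EuclideanSpace ℝ (Fin d) => ‖v‖) (stdGaussian d)
  rw [variance_eq_sub hmem] at hvar
  have hsq : (∫ v, ‖v‖ ∂(stdGaussian d)) ^ 2 ≤ (d : ℝ) := by
    have : ∫ v, (fun v : EuclideanSpace ℝ (Fin d) => ‖v‖) v ^ 2 ∂(stdGaussian d) = d := by
      simpa using integral_norm_sq (d := d)
    have h2 : ((fun v : EuclideanSpace ℝ (Fin d) => ‖v‖) ^ 2) = fun v => ‖v‖ ^ 2 := by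
      funext v; simp
    rw [h2] at hvar
    simp only at hvar
    linarith [integral_norm_sq (d := d)]
  have h0 : 0 ≤ ∫ v, ‖v‖ ∂(stdGaussian d) := integral_nonneg fun v => norm_nonneg v
  nlinarith [Real.sq_sqrt (Nat.cast_nonneg (α := ℝ) d), Real.sqrt_nonneg (d : ℝ)]

lemma integrable_id_vec : Integrable (fun v : EuclideanSpace ℝ (Fin d) => v) (stdGaussian d) := by
  refine Integrable.mono' ((integrable_const 1).add integrable_norm_sq)
    continuous_id.aestronglyMeasurable (Filter.Eventually.of_forall fun v => ?_)
  simp only [Pi.add_apply, id_eq]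
  nlinarith [norm_nonneg v, sq_nonneg (‖v‖ - 1)]

lemma integral_id_vec : ∫ v, v ∂(stdGaussian d) = (0 : EuclideanSpace ℝ (Fin d)) := by
  have h : ∀ i, (∫ v, v ∂(stdGaussian d)) i = 0 := by
    intro i
    have hc := (EuclideanSpace.proj i : EuclideanSpace ℝ (Fin d) →L[ℝ] ℝ).integral_comp_comm
      integrable_id_vec
    have : ∫ v : EuclideanSpace ℝ (Fin d), v i ∂(stdGaussian d) = 0 := by
      rw [integral_eval (f := fun x : ℝ => x) continuous_id.aestronglyMeasurable i,
        integral_id_g]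
    simpa [this] using hc.symm
  ext i
  exact h i

end StdGaussianAux13

open StdGaussianAux13 Real Set
open scoped ENNReal NNReal

/-- The gradient ∇F_η(θ) = E_v[((F(θ+ηv) − F(θ))/η) v] of the Gaussian smoothing of an
L₀-Lipschitz function is Lipschitz with constant √d L₀ / η. -/
theorem stmt_13 (d : ℕ) (F : EuclideanSpace ℝ (Fin d) → ℝ) (L₀ η : ℝ)
    (hLip : ∀ x y, |F x - F y| ≤ L₀ * ‖x - y‖) (hη : 0 < η) :
    ∀ x y : EuclideanSpace ℝ (Fin d),
      ‖(∫ v, ((F (x + η • v) - F x) / η) • v ∂(stdGaussian d))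
        - (∫ v, ((F (y + η • v) - F y) / η) • v ∂(stdGaussian d))‖
        ≤ (Real.sqrt d * L₀ / η) * ‖x - y‖ := by
  intro x y
  rcases eq_or_ne x y with rfl | hxy
  · simp
  -- L₀ is nonnegative
  have hxy' : 0 < ‖x - y‖ := by
    rw [norm_pos_iff]; exact sub_ne_zero_of_ne hxy
  have h0 : (0:ℝ) ≤ L₀ := by
    have h1 := hLip x y
    have h2 : (0:ℝ) ≤ L₀ * ‖x - y‖ := le_trans (abs_nonneg _) h1
    nlinarith
  -- continuity of F
  have hcont : Continuous F := by
    have : LipschitzWith (Real.toNNReal L₀) F := by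
      apply LipschitzWith.of_dist_le_mul
      intro a b
      rw [Real.dist_eq, dist_eq_norm, Real.coe_toNNReal _ h0]
      exact hLip a b
    exact this.continuous
  -- integrability of the three integrands
  have hmain : ∀ θ : EuclideanSpace ℝ (Fin d),
      Integrable (fun v : EuclideanSpace ℝ (Fin d) => ((F (θ + η • v) - F θ) / η) • v)
        (stdGaussian d) := by
    intro θ
    refine Integrable.mono' (integrable_norm_sq.const_mul L₀) ?_
      (Filter.Eventually.of_forall fun v => ?_)
    · exact (((hcont.comp ((continuous_const.add (continuous_const_smul η))) ).sub
        continuous_const).div_const η).smul continuous_id |>.aestronglyMeasurable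
    · rw [norm_smul, Real.norm_eq_abs, abs_div, abs_of_pos hη]
      have h1 : |F (θ + η • v) - F θ| ≤ L₀ * (η * ‖v‖) := by
        have := hLip (θ + η • v) θ
        simpa [norm_smul, abs_of_pos hη] using this
      have h2 : |F (θ + η • v) - F θ| / η * ‖v‖ ≤ L₀ * (η * ‖v‖) / η * ‖v‖ := by
        gcongr
      calc |F (θ + η • v) - F θ| / η * ‖v‖ ≤ L₀ * (η * ‖v‖) / η * ‖v‖ := h2
        _ = L₀ * ‖v‖ ^ 2 := by field_simp
  set B := L₀ * ‖x - y‖ / η with hB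
  have hB0 : 0 ≤ B := by positivity
  have hinth : Integrable
      (fun v : EuclideanSpace ℝ (Fin d) => ((F (x + η • v) - F (y + η • v)) / η) • v)
      (stdGaussian d) := by
    refine Integrable.mono' (integrable_norm.const_mul B) ?_
      (Filter.Eventually.of_forall fun v => ?_)
    · exact (((hcont.comp (continuous_const.add (continuous_const_smul η))).sub
        (hcont.comp (continuous_const.add (continuous_const_smul η)))).div_const η).smul
        continuous_id |>.aestronglyMeasurable
    · rw [norm_smul, Real.norm_eq_abs, abs_div, abs_of_pos hη]
      have h1 : |F (x + η • v) - F (y + η • v)| ≤ L₀ * ‖x - y‖ := by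
        have := hLip (x + η • v) (y + η • v)
        simpa using this
      rw [hB]
      gcongr
  have hintc : Integrable
      (fun v : EuclideanSpace ℝ (Fin d) => ((F x - F y) / η) • v) (stdGaussian d) :=
    integrable_id_vec.smul ((F x - F y) / η)
  have key : (∫ v, ((F (x + η • v) - F x) / η) • v ∂(stdGaussian d))
      - (∫ v, ((F (y + η • v) - F y) / η) • v ∂(stdGaussian d))
      = ∫ v, ((F (x + η • v) - F (y + η • v)) / η) • v ∂(stdGaussian d) := by
    rw [← integral_sub (hmain x) (hmain y)]
    have hfun : ∀ v : EuclideanSpace ℝ (Fin d),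
        ((F (x + η • v) - F x) / η) • v - ((F (y + η • v) - F y) / η) • v
        = ((F (x + η • v) - F (y + η • v)) / η) • v - ((F x - F y) / η) • v := by
      intro v
      rw [← sub_smul, ← sub_smul]
      congr 1
      ring
    simp_rw [hfun]
    rw [integral_sub hinth hintc, integral_smul, integral_id_vec, smul_zero, sub_zero]
  rw [key]
  calc ‖∫ v, ((F (x + η • v) - F (y + η • v)) / η) • v ∂(stdGaussian d)‖
      ≤ ∫ v, B * ‖v‖ ∂(stdGaussian d) := by
        refine norm_integral_le_of_norm_le (integrable_norm.const_mul B)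
          (Filter.Eventually.of_forall fun v => ?_)
        rw [norm_smul, Real.norm_eq_abs, abs_div, abs_of_pos hη, hB]
        gcongr
        simpa using hLip (x + η • v) (y + η • v)
    _ = B * ∫ v, ‖v‖ ∂(stdGaussian d) := integral_const_mul B _
    _ ≤ B * Real.sqrt d := mul_le_mul_of_nonneg_left integral_norm_le hB0
    _ = (Real.sqrt d * L₀ / η) * ‖x - y‖ := by rw [hB]; ring
end
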